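/- arXiv:2509.11282 — 14 statements merged into one kernel-verified Lean document; each statement's English description precedes it below -/
import Mathlib

section
/- Let (A,·,P) be a commutative differential algebra and [x,y] = x·P(y) − P(x)·y the corresponding Witt type Lie bracket. Then (A,·,[-,-],P) is a relative Poisson algebra: P is a derivation of both products and the relative Leibniz rule [z, x·y] = [z,x]·y + x·[z,y] + x·y·P(z) holds for all x,y,z ∈ A. -/
/-- A commutative differential algebra (A,·,P) with the Witt type
bracket [x,y] = x·P(y) − P(x)·y is a relative Poisson algebra. -/
theorem witt_gives_relative_poisson {K A : Type*} [Field K] [CharZero K]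
    [AddCommGroup A] [Module K A]
    (mul : A →ₗ[K] A →ₗ[K] A)
    (hcomm : ∀ x y : A, mul x y = mul y x)
    (hassoc : ∀ x y z : A, mul (mul x y) z = mul x (mul y z))
    (P : A →ₗ[K] A)
    (hP : ∀ x y : A, P (mul x y) = mul (P x) y + mul x (P y))
    (br : A → A → A)
    (hbr : ∀ x y : A, br x y = mul x (P y) - mul (P x) y) :
    (∀ x y : A, br x y = - br y x) ∧
    (∀ x y z : A, br x (br y z) + br y (br z x) + br z (br x y) = 0) ∧
    (∀ x y : A, P (br x y) = br (P x) y + br x (P y)) ∧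
    (∀ x y z : A, br z (mul x y)
      = mul (br z x) y + mul x (br z y) + mul (mul x y) (P z)) := by
  have hlc : ∀ a b c : A, mul a (mul b c) = mul b (mul a c) := by
    intro a b c
    rw [← hassoc, hcomm a b, hassoc]
  refine ⟨?_, ?_, ?_, ?_⟩
  · intro x y
    simp only [hbr, hcomm x (P y), hcomm (P x) y]
    abel
  · intro x y z
    simp only [hbr, map_sub, map_add, hP, LinearMap.sub_apply, LinearMap.add_apply,
      LinearMap.map_sub, LinearMap.map_add]
    simp only [hassoc, hcomm, hlc]
    abel
  · intro x y
    simp only [hbr, map_sub, map_add, hP, LinearMap.sub_apply, LinearMap.add_apply,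
      LinearMap.map_sub, LinearMap.map_add]
    abel
  · intro x y z
    simp only [hbr, map_sub, map_add, hP, LinearMap.sub_apply, LinearMap.add_apply,
      LinearMap.map_sub, LinearMap.map_add]
    simp only [hassoc, hcomm, hlc]
    abel
end

section
/- Let (A,·) be a commutative associative algebra, P a derivation of (A,·), and define [x,y] = x·P(y) − P(x)·y. If B is a symmetric bilinear form on A that is invariant, i.e. B(x·y, z) = B(x, y·z), then B is a commutative 2-cocycle on the Lie algebra (A,[-,-]), i.e. B([x,y],z) + B([y,z],x) + B([z,x],y) = 0 for all x,y,z ∈ A. -/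
/-- A symmetric invariant bilinear form on a commutative differential
algebra is a commutative 2-cocycle on the corresponding Witt type Lie algebra. -/
theorem invariant_form_is_commutative_two_cocycle {K A : Type*} [Field K] [CharZero K]
    [AddCommGroup A] [Module K A]
    (mul : A →ₗ[K] A →ₗ[K] A)
    (hcomm : ∀ x y : A, mul x y = mul y x)
    (hassoc : ∀ x y z : A, mul (mul x y) z = mul x (mul y z))
    (P : A →ₗ[K] A)
    (hP : ∀ x y : A, P (mul x y) = mul (P x) y + mul x (P y))
    (br : A → A → A)
    (hbr : ∀ x y : A, br x y = mul x (P y) - mul (P x) y)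
    (B : A →ₗ[K] A →ₗ[K] K)
    (hsymm : ∀ x y : A, B x y = B y x)
    (hinv : ∀ x y z : A, B (mul x y) z = B x (mul y z)) :
    ∀ x y z : A, B (br x y) z + B (br y z) x + B (br z x) y = 0 := by
  have key : ∀ a b c : A, B (mul a (P b)) c = B (P b) (mul c a) := by
    intro a b c
    rw [hcomm, hinv, hcomm a c, hsymm]
  intro x y z
  simp only [hbr, map_sub, LinearMap.sub_apply]
  rw [key x y z, key y z x, key z x y, hinv (P x) y z, hinv (P y) z x, hinv (P z) x y]
  ring
end

section
/- Let (A,·,P,Q) be an admissible commutative differential algebra and define x∘y = Q(x·y) − P(x)·y. Then (A,∘) is an anti-pre-Lie algebra, i.e. x∘(y∘z) − y∘(x∘z) = [y,x]∘z and [x,y]∘z + [y,z]∘x + [z,x]∘y = 0, where [x,y] = x∘y − y∘x. -/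
/-- x∘y = Q(x·y) − P(x)·y on an admissible commutative differential
algebra gives an anti-pre-Lie algebra. -/
theorem admissible_gives_anti_pre_lie {K A : Type*} [Field K] [CharZero K]
    [AddCommGroup A] [Module K A]
    (mul : A →ₗ[K] A →ₗ[K] A)
    (hcomm : ∀ x y : A, mul x y = mul y x)
    (hassoc : ∀ x y z : A, mul (mul x y) z = mul x (mul y z))
    (P Q : A →ₗ[K] A)
    (hP : ∀ x y : A, P (mul x y) = mul (P x) y + mul x (P y))
    (hQ : ∀ x y : A, mul x (Q y) - mul (P x) y - Q (mul x y) = 0)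
    (circ : A → A → A)
    (hcirc : ∀ x y : A, circ x y = Q (mul x y) - mul (P x) y) :
    (∀ x y z : A,
      circ x (circ y z) - circ y (circ x z) = circ (circ y x - circ x y) z) ∧
    (∀ x y z : A,
      circ (circ x y - circ y x) z + circ (circ y z - circ z y) x
        + circ (circ z x - circ x z) y = 0) := by
  have hQ' : ∀ a b : A, Q (mul a b) = mul a (Q b) - mul (P a) b :=
    fun a b => (sub_eq_zero.mp (hQ a b)).symm
  have hS : ∀ a b : A, mul a (Q b) - mul b (Q a) = mul (P a) b - mul (P b) a := by
    intro a b
    have h2 := hQ' b a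
    rw [hcomm b a] at h2
    have h := (hQ' a b).symm.trans h2
    rw [sub_eq_sub_iff_sub_eq_sub] at h
    exact h
  have hlc : ∀ a b c : A, mul a (mul b c) = mul b (mul a c) := by
    intro a b c; rw [← hassoc, hcomm a b, hassoc]
  constructor <;> intro x y z
  · simp only [hcirc]
    simp only [hcomm y x]
    simp only [map_sub, map_add, LinearMap.sub_apply, LinearMap.add_apply, hQ', hP]
    simp only [hcomm, hassoc, hlc]
    abel
  · have e1 : mul (P x) (mul z (Q y)) - mul (P x) (mul y (Q z))
        = mul (P x) (mul (P z) y) - mul (P x) (mul (P y) z) := by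
      rw [← map_sub, ← map_sub, hS z y]
    have e2 : mul (P y) (mul x (Q z)) - mul (P y) (mul z (Q x))
        = mul (P y) (mul (P x) z) - mul (P y) (mul (P z) x) := by
      rw [← map_sub, ← map_sub, hS x z]
    have e3 : mul (P z) (mul y (Q x)) - mul (P z) (mul x (Q y))
        = mul (P z) (mul (P y) x) - mul (P z) (mul (P x) y) := by
      rw [← map_sub, ← map_sub, hS y x]
    have total : (mul (P x) (mul z (Q y)) - mul (P x) (mul y (Q z)))
        + (mul (P y) (mul x (Q z)) - mul (P y) (mul z (Q x)))
        + (mul (P z) (mul y (Q x)) - mul (P z) (mul x (Q y))) = 0 := by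
      rw [e1, e2, e3]
      simp only [hcomm, hassoc, hlc]
      abel
    simp only [hcirc]
    simp only [hcomm y x, hcomm z y, hcomm z x]
    simp only [map_sub, map_add, LinearMap.sub_apply, LinearMap.add_apply, hQ', hP]
    simp only [hcomm, hassoc, hlc] at total ⊢
    abel_nf at total ⊢
    exact total
end

section
/- Let (A,·,P,Q) be an admissible commutative differential algebra and define x∘y = Q(x·y) − P(x)·y and [x,y] = x·P(y) − P(x)·y. Then (A,·,∘,P,Q) is a relative PCA algebra: the identities x·Q(y) − P(x)·y − Q(x·y) = 0, x∘Q(y) − P(x)∘y − Q(x∘y) = 0, x·(y∘z) − y∘(x·z) + [x,y]·z − x·P(y)·z = 0, and (x·y)∘z − y∘(x·z) − x∘(y·z) + Q(x·y·z) = 0 all hold. -/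
/-- An admissible commutative differential algebra (A,·,P,Q) with
x∘y = Q(x·y) − P(x)·y and [x,y] = x·P(y) − P(x)·y is a relative PCA algebra. -/
theorem admissible_gives_relative_PCA {K A : Type*} [Field K] [CharZero K]
    [AddCommGroup A] [Module K A]
    (mul : A →ₗ[K] A →ₗ[K] A)
    (hcomm : ∀ x y : A, mul x y = mul y x)
    (hassoc : ∀ x y z : A, mul (mul x y) z = mul x (mul y z))
    (P Q : A →ₗ[K] A)
    (hP : ∀ x y : A, P (mul x y) = mul (P x) y + mul x (P y))
    (hQ : ∀ x y : A, mul x (Q y) = mul (P x) y + Q (mul x y))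
    (circ : A → A → A)
    (hcirc : ∀ x y : A, circ x y = Q (mul x y) - mul (P x) y)
    (br : A → A → A)
    (hbr : ∀ x y : A, br x y = mul x (P y) - mul (P x) y) :
    (∀ x y : A, mul x (Q y) - mul (P x) y - Q (mul x y) = 0) ∧
    (∀ x y : A, circ x (Q y) - circ (P x) y - Q (circ x y) = 0) ∧
    (∀ x y z : A,
      mul x (circ y z) - circ y (mul x z) + mul (br x y) z
        - mul (mul x (P y)) z = 0) ∧
    (∀ x y z : A,
      circ (mul x y) z - circ y (mul x z) - circ x (mul y z)
        + Q (mul (mul x y) z) = 0) := by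
  have hswap : ∀ a b c : A, mul a (mul b c) = mul b (mul a c) := by
    intro a b c
    rw [← hassoc, hcomm a b, hassoc]
  refine ⟨?_, ?_, ?_, ?_⟩
  · intro x y
    rw [hQ]; abel
  · intro x y
    simp only [hcirc, map_sub, hQ, map_add]
    abel
  · intro x y z
    simp only [hcirc, hbr, map_sub, map_add, LinearMap.sub_apply, LinearMap.map_sub,
      LinearMap.map_add]
    rw [hQ, hswap x (P y) z, hassoc (P x) y z, hswap y x z]
    abel
  · intro x y z
    simp only [hcirc, map_sub]
    rw [hP, map_add, LinearMap.add_apply, hassoc x y z, hswap y x z,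
      hassoc (P x) y z, hassoc x (P y) z, hswap x (P y) z]
    abel
end

section
/- Let (A,[-,-]) be a Lie algebra with a nondegenerate commutative 2-cocycle B, and define ∘ by B(x∘y, z) = B(y, [x,z]). Then (A,∘) is an anti-pre-Lie algebra whose sub-adjacent bracket x∘y − y∘x coincides with [x,y]. -/
/-- A nondegenerate commutative 2-cocycle B on a Lie algebra induces a
compatible anti-pre-Lie structure via B(x∘y,z) = B(y,[x,z]). -/
theorem two_cocycle_gives_anti_pre_lie {K A : Type*} [Field K] [CharZero K]
    [AddCommGroup A] [Module K A]
    (bracket : A →ₗ[K] A →ₗ[K] A)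
    (hanti : ∀ x y : A, bracket x y = - bracket y x)
    (hjacobi : ∀ x y z : A,
      bracket x (bracket y z) + bracket y (bracket z x) + bracket z (bracket x y) = 0)
    (B : A →ₗ[K] A →ₗ[K] K)
    (hsymm : ∀ x y : A, B x y = B y x)
    (hnondeg : ∀ x : A, (∀ y : A, B x y = 0) → x = 0)
    (hcoc : ∀ x y z : A,
      B (bracket x y) z + B (bracket y z) x + B (bracket z x) y = 0)
    (circ : A → A → A)
    (hcirc : ∀ x y z : A, B (circ x y) z = B y (bracket x z)) :
    (∀ x y z : A,
      circ x (circ y z) - circ y (circ x z) = circ (circ y x - circ x y) z) ∧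
    (∀ x y z : A,
      circ (circ x y - circ y x) z + circ (circ y z - circ z y) x
        + circ (circ z x - circ x z) y = 0) ∧
    (∀ x y : A, circ x y - circ y x = bracket x y) := by
  -- B applied to the Leibniz form of the Jacobi identity
  have keyB : ∀ t x y w : A, B t (bracket (bracket x y) w)
      = B t (bracket x (bracket y w)) - B t (bracket y (bracket x w)) := by
    intro t x y w
    have h := congrArg (B t) (hjacobi x y w)
    rw [map_add, map_add, map_zero] at h
    rw [hanti w x, map_neg, map_neg, hanti w (bracket x y), map_neg] at h
    linear_combination -h
  -- pair lemma: B a [b,u] - B b [a,u] = - B [a,b] u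
  have pairB : ∀ a b u : A, B a (bracket b u) - B b (bracket a u)
      = - B (bracket a b) u := by
    intro a b u
    have hc := hcoc b u a
    rw [hsymm (bracket b u) a, hsymm (bracket u a) b, hanti u a, map_neg] at hc
    linear_combination hc
  -- per-term cocycle expansion: B z [u,w] = - B [w,z] u - B [z,u] w
  have cocA : ∀ u w z : A, B z (bracket u w)
      = - B (bracket w z) u - B (bracket z u) w := by
    intro u w z
    have hc := hcoc u w z
    rw [hsymm (bracket u w) z] at hc
    linear_combination hc
  -- the sub-adjacent bracket
  have part3 : ∀ x y : A, circ x y - circ y x = bracket x y := by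
    intro x y
    have h : ∀ w : A, B (circ x y - circ y x - bracket x y) w = 0 := by
      intro w
      rw [map_sub, map_sub, LinearMap.sub_apply, LinearMap.sub_apply, hcirc, hcirc]
      have hc := hcoc x y w
      rw [hsymm (bracket y w) x, hsymm (bracket w x) y, hanti w x, map_neg] at hc
      linear_combination -hc
    exact sub_eq_zero.mp (hnondeg _ h)
  have part1 : ∀ x y z : A,
      circ x (circ y z) - circ y (circ x z) = circ (circ y x - circ x y) z := by
    intro x y z
    rw [part3 y x]
    have h : ∀ w : A,
        B (circ x (circ y z) - circ y (circ x z) - circ (bracket y x) z) w = 0 := by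
      intro w
      rw [map_sub, map_sub, LinearMap.sub_apply, LinearMap.sub_apply,
        hcirc, hcirc, hcirc, hcirc, hcirc, keyB z y x w]
      ring
    exact sub_eq_zero.mp (hnondeg _ h)
  refine ⟨part1, ?_, part3⟩
  intro x y z
  rw [part3 x y, part3 y z, part3 z x]
  have h : ∀ w : A,
      B (circ (bracket x y) z + circ (bracket y z) x + circ (bracket z x) y) w = 0 := by
    intro w
    rw [map_add, map_add, LinearMap.add_apply, LinearMap.add_apply, hcirc, hcirc, hcirc]
    set S := B z (bracket (bracket x y) w) + B x (bracket (bracket y z) w)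
      + B y (bracket (bracket z x) w) with hS
    -- Jacobi summed against w
    have hj : B (bracket z (bracket x y)) w + B (bracket x (bracket y z)) w
        + B (bracket y (bracket z x)) w = 0 := by
      have := congrArg (fun a => B a w) (hjacobi z x y)
      simpa [map_add] using this
    have eqA : S = -(B (bracket w z) (bracket x y) + B (bracket w x) (bracket y z)
        + B (bracket w y) (bracket z x)) := by
      rw [hS]
      linear_combination cocA (bracket x y) w z + cocA (bracket y z) w x
        + cocA (bracket z x) w y - hj
    have eqB : S = -(B (bracket z x) (bracket y w) + B (bracket x y) (bracket z w)
        + B (bracket y z) (bracket x w)) := by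
      rw [hS]
      linear_combination keyB z x y w + keyB x y z w + keyB y z x w
        + pairB z x (bracket y w) + pairB x y (bracket z w) + pairB y z (bracket x w)
    have s1 : B (bracket w z) (bracket x y) = - B (bracket x y) (bracket z w) := by
      rw [hsymm, hanti w z, map_neg]
    have s2 : B (bracket w x) (bracket y z) = - B (bracket y z) (bracket x w) := by
      rw [hsymm, hanti w x, map_neg]
    have s3 : B (bracket w y) (bracket z x) = - B (bracket z x) (bracket y w) := by
      rw [hsymm, hanti w y, map_neg]
    have h2 : (2 : K) * S = 0 := by linear_combination eqA + eqB - s1 - s2 - s3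
    exact (mul_eq_zero.mp h2).resolve_left two_ne_zero
  exact hnondeg _ h
end

section
/- Let (A,·,[-,-],P) be a relative Poisson algebra with a nondegenerate symmetric bilinear form B that is invariant on (A,·) and a commutative 2-cocycle on (A,[-,-]). Let ∘ be defined by B(x∘y,z) = B(y,[x,z]) and let P̂ be the adjoint of P with respect to B, i.e. B(P̂(x),y) = B(x,P(y)). Then the identity x∘P̂(z) − P(x)∘z − P̂(x∘z) = 0 holds for all x,z ∈ A. -/
/-- For a relative Poisson algebra with an invariant-c2c form B,
the induced ∘ and the B-adjoint P̂ of P satisfy x∘P̂(z) − P(x)∘z − P̂(x∘z) = 0. -/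
theorem adjoint_identity_for_circ {K A : Type*} [Field K] [CharZero K]
    [AddCommGroup A] [Module K A]
    (mul : A →ₗ[K] A →ₗ[K] A)
    (hcomm : ∀ x y : A, mul x y = mul y x)
    (hassoc : ∀ x y z : A, mul (mul x y) z = mul x (mul y z))
    (bracket : A →ₗ[K] A →ₗ[K] A)
    (hanti : ∀ x y : A, bracket x y = - bracket y x)
    (hjacobi : ∀ x y z : A,
      bracket x (bracket y z) + bracket y (bracket z x) + bracket z (bracket x y) = 0)
    (P : A →ₗ[K] A)
    (hPmul : ∀ x y : A, P (mul x y) = mul (P x) y + mul x (P y))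
    (hPbr : ∀ x y : A, P (bracket x y) = bracket (P x) y + bracket x (P y))
    (hLeib : ∀ x y z : A, bracket z (mul x y)
      = mul (bracket z x) y + mul x (bracket z y) + mul (mul x y) (P z))
    (B : A →ₗ[K] A →ₗ[K] K)
    (hsymm : ∀ x y : A, B x y = B y x)
    (hnondeg : ∀ x : A, (∀ y : A, B x y = 0) → x = 0)
    (hinv : ∀ x y z : A, B (mul x y) z = B x (mul y z))
    (hcoc : ∀ x y z : A,
      B (bracket x y) z + B (bracket y z) x + B (bracket z x) y = 0)
    (circ : A → A → A)
    (hcirc : ∀ x y z : A, B (circ x y) z = B y (bracket x z))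
    (Phat : A → A)
    (hPhat : ∀ x y : A, B (Phat x) y = B x (P y)) :
    ∀ x z : A, circ x (Phat z) - circ (P x) z - Phat (circ x z) = 0 := by
  intro x z
  apply hnondeg
  intro y
  have h1 : B (circ x (Phat z)) y = B z (bracket (P x) y) + B z (bracket x (P y)) := by
    rw [hcirc, hPhat, hPbr, map_add]
  have h2 : B (circ (P x) z) y = B z (bracket (P x) y) := hcirc _ _ _
  have h3 : B (Phat (circ x z)) y = B z (bracket x (P y)) := by
    rw [hPhat, hcirc]
  simp [map_sub, h1, h2, h3]
end

section
/- Let (A,·,∘,P,Q) be a relative PCA algebra such that (A,·) has a unit 1 and (A,·,[-,-]) is a Jacobi algebra, where [x,y] = x∘y − y∘x. Then 1∘x = Q(x) for all x, and [x,y] = x·P(y) − y·P(x) for all x,y, i.e. (A,[-,-]) is the Witt type Lie algebra of (A,·,P) where P = [1,-]. -/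
/-- In a unital relative PCA algebra whose underlying structure is a
Jacobi algebra, 1∘x = Q(x), P = [1,-], and the bracket is the Witt type bracket of
(A,·,P). -/
theorem unital_relative_PCA_is_witt {K A : Type*} [Field K] [CharZero K]
    [AddCommGroup A] [Module K A]
    (mul : A →ₗ[K] A →ₗ[K] A)
    (hcomm : ∀ x y : A, mul x y = mul y x)
    (hassoc : ∀ x y z : A, mul (mul x y) z = mul x (mul y z))
    (circ : A →ₗ[K] A →ₗ[K] A)
    (br : A → A → A)
    (hbr : ∀ x y : A, br x y = circ x y - circ y x)
    (hapl1 : ∀ x y z : A,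
      circ x (circ y z) - circ y (circ x z) = circ (br y x) z)
    (hapl2 : ∀ x y z : A,
      circ (br x y) z + circ (br y z) x + circ (br z x) y = 0)
    (P Q : A →ₗ[K] A)
    (hPmul : ∀ x y : A, P (mul x y) = mul (P x) y + mul x (P y))
    (hPbr : ∀ x y : A, P (br x y) = br (P x) y + br x (P y))
    (hLeib : ∀ x y z : A, br z (mul x y)
      = mul (br z x) y + mul x (br z y) + mul (mul x y) (P z))
    (hpca1 : ∀ x y : A, mul x (Q y) - mul (P x) y - Q (mul x y) = 0)
    (hpca2 : ∀ x y : A, circ x (Q y) - circ (P x) y - Q (circ x y) = 0)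
    (hpca3 : ∀ x y z : A,
      mul x (circ y z) - circ y (mul x z) + mul (br x y) z
        - mul (mul x (P y)) z = 0)
    (hpca4 : ∀ x y z : A,
      circ (mul x y) z - circ y (mul x z) - circ x (mul y z)
        + Q (mul (mul x y) z) = 0)
    (one : A)
    (hone : ∀ x : A, mul one x = x)
    (hJacobi : ∀ x y z : A, br z (mul x y)
      = mul (br z x) y + mul x (br z y) + mul (mul x y) (br one z)) :
    (∀ x : A, circ one x = Q x) ∧
    (∀ x : A, P x = br one x) ∧
    (∀ x y : A, br x y = mul x (P y) - mul y (P x)) := by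

  have hmul1 : ∀ x : A, mul x one = x := fun x => (hcomm x one).trans (hone x)
  -- 1 ∘ x = Q x
  have hQ : ∀ z : A, circ one z = Q z := by
    intro z
    have e := hpca4 one one z
    simp only [hone] at e
    have h6 : (1:K) • circ one z = (1:K) • Q z := by
      linear_combination (norm := module) -e
    simpa using h6
  -- P = [1, -]
  have hPz : ∀ z : A, P z = br one z := by
    intro z
    have e1 := hLeib one one z
    have e2 := hJacobi one one z
    simp only [hone, hmul1] at e1 e2
    exact add_left_cancel (e1.symm.trans e2)
  have hPone : P one = 0 := by rw [hPz one, hbr one one]; exact sub_self _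
  -- Q x = x · Q(1) - P x
  have hQx : ∀ x : A, Q x = mul x (Q one) - P x := by
    intro x
    have e := hpca1 x one
    simp only [hmul1] at e
    have h6 : (1:K) • Q x = (1:K) • (mul x (Q one) - P x) := by
      linear_combination (norm := module) -e
    simpa using h6
  -- star identity from hpca3 at z = 1
  have hstar : ∀ x y : A, circ y x = br x y + mul x (circ y one) - mul x (P y) := by
    intro x y
    have e := hpca3 x y one
    simp only [hmul1] at e
    have h6 : (1:K) • circ y x = (1:K) • (br x y + mul x (circ y one) - mul x (P y)) := by
      linear_combination (norm := module) -e
    simpa using h6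
  -- 3 [x,y] = y·(x∘1) - x·(y∘1) - y·P x + x·P y
  have h3br : ∀ x y : A, br x y + br x y + br x y
      = mul y (circ x one) - mul x (circ y one) - mul y (P x) + mul x (P y) := by
    intro x y
    have hanti : br y x = -br x y := by rw [hbr, hbr]; abel
    have h := hbr x y
    rw [hstar y x, hstar x y, hanti] at h
    linear_combination (norm := module) h
  -- x ∘ 1 = x · Q(1) - 2 P x
  have hfx : ∀ x : A, circ x one = mul x (Q one) - P x - P x := by
    intro x
    have h3 := h3br x one
    rw [hone, hone, hPone, map_zero, hQ one] at h3
    have hbx : br x one = circ x one - Q x := by rw [hbr, hQ]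
    rw [hbx, hQx x] at h3
    have h2 : (2:K) • (circ x one) = (2:K) • (mul x (Q one) - P x - P x) := by
      linear_combination (norm := module) h3
    exact smul_right_injective A (by norm_num : (2:K) ≠ 0) h2
  refine ⟨hQ, hPz, ?_⟩
  intro x y
  have h3 := h3br x y
  rw [hfx x, hfx y, map_sub, map_sub, map_sub, map_sub] at h3
  have hcom : mul y (mul x (Q one)) = mul x (mul y (Q one)) := by
    rw [← hassoc, hcomm y x, hassoc]
  rw [hcom] at h3
  have h6 : (3:K) • br x y = (3:K) • (mul x (P y) - mul y (P x)) := by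
    linear_combination (norm := module) h3
  exact smul_right_injective A (by norm_num : (3:K) ≠ 0) h6
end

section
/- Suppose (A,·,P) is a unital commutative differential algebra with a nondegenerate symmetric invariant bilinear form B, and let [x,y] = x·P(y) − P(x)·y. Then (A,·,[-,-]) is a Jacobi algebra, B is a commutative 2-cocycle on (A,[-,-]), and P = ad(1) = [1,-]. -/
/-- A unital commutative differential algebra with a nondegenerate
symmetric invariant bilinear form yields a Jacobi algebra via the Witt type bracket,
on which B is a commutative 2-cocycle, and P = [1,-]. -/
theorem unital_diff_frobenius_gives_jacobi {K A : Type*} [Field K] [CharZero K]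
    [AddCommGroup A] [Module K A]
    (mul : A →ₗ[K] A →ₗ[K] A)
    (hcomm : ∀ x y : A, mul x y = mul y x)
    (hassoc : ∀ x y z : A, mul (mul x y) z = mul x (mul y z))
    (one : A)
    (hone : ∀ x : A, mul one x = x)
    (P : A →ₗ[K] A)
    (hP : ∀ x y : A, P (mul x y) = mul (P x) y + mul x (P y))
    (B : A →ₗ[K] A →ₗ[K] K)
    (hsymm : ∀ x y : A, B x y = B y x)
    (hnondeg : ∀ x : A, (∀ y : A, B x y = 0) → x = 0)
    (hinv : ∀ x y z : A, B (mul x y) z = B x (mul y z))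
    (br : A → A → A)
    (hbr : ∀ x y : A, br x y = mul x (P y) - mul (P x) y) :
    (∀ x y : A, br x y = - br y x) ∧
    (∀ x y z : A, br x (br y z) + br y (br z x) + br z (br x y) = 0) ∧
    (∀ x y z : A, br z (mul x y)
      = mul (br z x) y + mul x (br z y) + mul (mul x y) (br one z)) ∧
    (∀ x y z : A, B (br x y) z + B (br y z) x + B (br z x) y = 0) ∧
    (∀ x : A, P x = br one x) := by
  -- P one = 0
  have h0 : P one = 0 := by
    have h := hP one one
    rw [hone one, hone (P one), hcomm (P one) one, hone (P one)] at h
    exact right_eq_add.mp h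
  -- endow A with a commutative ring structure for the `ring` tactic
  letI : CommRing A :=
    { (inferInstance : AddCommGroup A) with
      mul := fun x y => mul x y
      one := one
      left_distrib := fun a b c => map_add (mul a) b c
      right_distrib := fun a b c => by
        show mul (a + b) c = mul a c + mul b c
        rw [map_add]; rfl
      zero_mul := fun a => by show mul 0 a = 0; rw [map_zero]; rfl
      mul_zero := fun a => map_zero (mul a)
      mul_assoc := hassoc
      one_mul := hone
      mul_one := fun x => (hcomm x one).trans (hone x)
      mul_comm := hcomm }
  have hm : ∀ x y : A, mul x y = x * y := fun _ _ => rfl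
  have hone' : one = (1 : A) := rfl
  have hP' : ∀ x y : A, P (x * y) = P x * y + x * P y := hP
  have hbr' : ∀ x y : A, br x y = x * P y - P x * y := hbr
  refine ⟨?_, ?_, ?_, ?_, ?_⟩
  · intro x y
    rw [hbr', hbr']; ring
  · intro x y z
    simp only [hbr', map_sub, hP']
    ring
  · intro x y z
    simp only [hm, hbr', hP', hone', h0, show P (1 : A) = 0 from h0]
    ring
  · intro x y z
    have hkey : ∀ a b c : A, B c (mul a b) = B a (mul b c) :=
      fun a b c => (hsymm c _).trans (hinv a b c)
    simp only [hbr, map_sub, LinearMap.sub_apply, hinv]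
    rw [hkey (P y) z x, hkey (P z) x y, hkey (P x) y z]
    abel
  · intro x
    rw [hbr one x, hone, h0]
    simp
end

section
/- In any relative PCA algebra (A,·,∘,P,Q), the identity (x·y)∘z + z∘(x·y) = y∘(x·z) + (x·z)∘y holds for all x,y,z ∈ A. -/
/-- In any relative PCA algebra,
(x·y)∘z + z∘(x·y) = y∘(x·z) + (x·z)∘y. -/
theorem relative_PCA_exchange_identity {K A : Type*} [Field K] [CharZero K]
    [AddCommGroup A] [Module K A]
    (mul : A →ₗ[K] A →ₗ[K] A)
    (hcomm : ∀ x y : A, mul x y = mul y x)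
    (hassoc : ∀ x y z : A, mul (mul x y) z = mul x (mul y z))
    (circ : A →ₗ[K] A →ₗ[K] A)
    (br : A → A → A)
    (hbr : ∀ x y : A, br x y = circ x y - circ y x)
    (hapl1 : ∀ x y z : A,
      circ x (circ y z) - circ y (circ x z) = circ (br y x) z)
    (hapl2 : ∀ x y z : A,
      circ (br x y) z + circ (br y z) x + circ (br z x) y = 0)
    (P Q : A →ₗ[K] A)
    (hPmul : ∀ x y : A, P (mul x y) = mul (P x) y + mul x (P y))
    (hPbr : ∀ x y : A, P (br x y) = br (P x) y + br x (P y))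
    (hLeib : ∀ x y z : A, br z (mul x y)
      = mul (br z x) y + mul x (br z y) + mul (mul x y) (P z))
    (hpca1 : ∀ x y : A, mul x (Q y) - mul (P x) y - Q (mul x y) = 0)
    (hpca2 : ∀ x y : A, circ x (Q y) - circ (P x) y - Q (circ x y) = 0)
    (hpca3 : ∀ x y z : A,
      mul x (circ y z) - circ y (mul x z) + mul (br x y) z
        - mul (mul x (P y)) z = 0)
    (hpca4 : ∀ x y z : A,
      circ (mul x y) z - circ y (mul x z) - circ x (mul y z)
        + Q (mul (mul x y) z) = 0)
    :
    ∀ x y z : A, circ (mul x y) z + circ z (mul x y)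
      = circ y (mul x z) + circ (mul x z) y := by
  intro x y z
  have h1 := hpca4 x y z
  have h2 := hpca4 x z y
  have hc : mul y z = mul z y := hcomm y z
  have hm : mul (mul x y) z = mul (mul x z) y := by
    rw [hassoc, hcomm y z, ← hassoc]
  rw [hc, hm] at h1
  rw [← sub_eq_zero]
  have key : circ (mul x y) z + circ z (mul x y)
      - (circ y (mul x z) + circ (mul x z) y)
      = (circ (mul x y) z - circ y (mul x z) - circ x (mul z y)
          + Q (mul (mul x z) y))
        - (circ (mul x z) y - circ z (mul x y) - circ x (mul z y)
          + Q (mul (mul x z) y)) := by abel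
  rw [key, h1, h2, sub_zero]
end

section
/- In any relative PCA algebra (A,·,∘,P,Q), the identity (2Q−P)(x·y·z) = (x·y)∘z + z∘(x·y) holds for all x,y,z ∈ A. -/
/-- In any relative PCA algebra,
(2Q−P)(x·y·z) = (x·y)∘z + z∘(x·y). -/
theorem relative_PCA_2Q_sub_P_identity {K A : Type*} [Field K] [CharZero K]
    [AddCommGroup A] [Module K A]
    (mul : A →ₗ[K] A →ₗ[K] A)
    (hcomm : ∀ x y : A, mul x y = mul y x)
    (hassoc : ∀ x y z : A, mul (mul x y) z = mul x (mul y z))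
    (circ : A →ₗ[K] A →ₗ[K] A)
    (br : A → A → A)
    (hbr : ∀ x y : A, br x y = circ x y - circ y x)
    (hapl1 : ∀ x y z : A,
      circ x (circ y z) - circ y (circ x z) = circ (br y x) z)
    (hapl2 : ∀ x y z : A,
      circ (br x y) z + circ (br y z) x + circ (br z x) y = 0)
    (P Q : A →ₗ[K] A)
    (hPmul : ∀ x y : A, P (mul x y) = mul (P x) y + mul x (P y))
    (hPbr : ∀ x y : A, P (br x y) = br (P x) y + br x (P y))
    (hLeib : ∀ x y z : A, br z (mul x y)
      = mul (br z x) y + mul x (br z y) + mul (mul x y) (P z))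
    (hpca1 : ∀ x y : A, mul x (Q y) - mul (P x) y - Q (mul x y) = 0)
    (hpca2 : ∀ x y : A, circ x (Q y) - circ (P x) y - Q (circ x y) = 0)
    (hpca3 : ∀ x y z : A,
      mul x (circ y z) - circ y (mul x z) + mul (br x y) z
        - mul (mul x (P y)) z = 0)
    (hpca4 : ∀ x y z : A,
      circ (mul x y) z - circ y (mul x z) - circ x (mul y z)
        + Q (mul (mul x y) z) = 0)
    :
    ∀ x y z : A, 2 • Q (mul (mul x y) z) - P (mul (mul x y) z)
      = circ (mul x y) z + circ z (mul x y) := by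
  intro x y z
  have exzY : mul (mul x z) y = mul (mul x y) z := by
    rw [hassoc, hassoc, hcomm z y]
  have eyzX : mul (mul y z) x = mul (mul x y) z := by
    rw [hcomm (mul y z) x]; exact (hassoc x y z).symm
  have c2 := hpca4 x z y
  have c3 := hpca4 y z x
  rw [hcomm z y, exzY] at c2
  rw [hcomm y x, hcomm z x, eyzX] at c3
  have p1 : mul (mul x z) (P y) = mul (mul x (P y)) z := by
    rw [hassoc, hassoc, hcomm z (P y)]
  have p2 : mul (mul y z) (P x) = mul (mul (P x) y) z := by
    rw [hcomm (mul y z) (P x), ← hassoc]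
  have pm' : P (mul (mul x y) z)
      = mul (mul (P x) y) z + mul (mul x (P y)) z + mul (mul x y) (P z) := by
    rw [hPmul (mul x y) z, hPmul x y, map_add, LinearMap.add_apply]
  have l1 := hLeib x y z
  have l2 := hLeib x z y
  have l3 := hLeib y z x
  simp only [hbr, map_sub, LinearMap.sub_apply] at l1 l2 l3
  rw [p1] at l2
  rw [p2] at l3
  rw [hcomm (circ z x) y, hcomm (circ x z) y] at l1
  linear_combination (norm := module) c2 + c3 + l1 + l2 + l3 - pm'
end

section
/- In any relative PCA algebra (A,·,∘,P,Q), the identity 2·x·P(y)·z = 2[x,y]·z + x·(z∘y) − (x·z)∘y holds for all x,y,z ∈ A, where [x,y] = x∘y − y∘x. -/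
/-- In any relative PCA algebra,
2·x·P(y)·z = 2[x,y]·z + x·(z∘y) − (x·z)∘y. -/
theorem relative_PCA_two_xPy_z_identity {K A : Type*} [Field K] [CharZero K]
    [AddCommGroup A] [Module K A]
    (mul : A →ₗ[K] A →ₗ[K] A)
    (hcomm : ∀ x y : A, mul x y = mul y x)
    (hassoc : ∀ x y z : A, mul (mul x y) z = mul x (mul y z))
    (circ : A →ₗ[K] A →ₗ[K] A)
    (br : A → A → A)
    (hbr : ∀ x y : A, br x y = circ x y - circ y x)
    (hapl1 : ∀ x y z : A,
      circ x (circ y z) - circ y (circ x z) = circ (br y x) z)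
    (hapl2 : ∀ x y z : A,
      circ (br x y) z + circ (br y z) x + circ (br z x) y = 0)
    (P Q : A →ₗ[K] A)
    (hPmul : ∀ x y : A, P (mul x y) = mul (P x) y + mul x (P y))
    (hPbr : ∀ x y : A, P (br x y) = br (P x) y + br x (P y))
    (hLeib : ∀ x y z : A, br z (mul x y)
      = mul (br z x) y + mul x (br z y) + mul (mul x y) (P z))
    (hpca1 : ∀ x y : A, mul x (Q y) - mul (P x) y - Q (mul x y) = 0)
    (hpca2 : ∀ x y : A, circ x (Q y) - circ (P x) y - Q (circ x y) = 0)
    (hpca3 : ∀ x y z : A,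
      mul x (circ y z) - circ y (mul x z) + mul (br x y) z
        - mul (mul x (P y)) z = 0)
    (hpca4 : ∀ x y z : A,
      circ (mul x y) z - circ y (mul x z) - circ x (mul y z)
        + Q (mul (mul x y) z) = 0)
    :
    ∀ x y z : A, 2 • mul (mul x (P y)) z
      = 2 • mul (br x y) z + mul x (circ z y) - circ (mul x z) y := by
  intro x y z
  have assoc' : mul (mul x (P y)) z = mul (mul x z) (P y) := by
    rw [hassoc, hcomm (P y) z, ← hassoc]
  have e1 := hpca3 x y z
  have e2 := hLeib x z y
  simp only [hbr, map_sub, LinearMap.sub_apply] at e1 e2 ⊢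
  linear_combination (norm := module) -e1 - e2 + assoc'
end

section
/- Let (A,≻,≺) be a pre-APL algebra. Then x⋄y := x≻y − y≺x defines a pre-Lie algebra structure on A, i.e. (x⋄y)⋄z − x⋄(y⋄z) = (y⋄x)⋄z − y⋄(x⋄z). Moreover the sub-adjacent Lie bracket of ⋄ coincides with that of the anti-pre-Lie product x∘y := x≻y + x≺y. -/
/-- For a pre-APL algebra (A,≻,≺), x⋄y = x≻y − y≺x is a pre-Lie
product whose commutator coincides with that of the anti-pre-Lie product
x∘y = x≻y + x≺y. -/
theorem pre_APL_subadjacent_pre_lie {K A : Type*} [Field K] [CharZero K]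
    [AddCommGroup A] [Module K A]
    (succ prec : A →ₗ[K] A →ₗ[K] A)
    (h1 : ∀ x y z : A,
      succ x (succ y z) - succ y (succ x z)
        = succ (succ y x + prec y x) z - succ (succ x y + prec x y) z)
    (h2 : ∀ x y z : A,
      prec z (succ x y + prec x y)
        = succ x (prec z y) + prec (succ x z) y - prec (prec z x) y)
    (h3 : ∀ x y z : A,
      succ x (succ y z) - succ y (succ x z)
        = prec (succ y z) x - prec (succ x z) y - prec (prec z y) x
          + prec (prec z x) y)
    (dia : A → A → A)
    (hdia : ∀ x y : A, dia x y = succ x y - prec y x)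
    (circ : A → A → A)
    (hcirc : ∀ x y : A, circ x y = succ x y + prec x y) :
    (∀ x y z : A,
      dia (dia x y) z - dia x (dia y z) = dia (dia y x) z - dia y (dia x z)) ∧
    (∀ x y : A, dia x y - dia y x = circ x y - circ y x) := by
  constructor
  · intro x y z
    have H1 := h1 x y z
    have H2 := h2 x y z
    have H2' := h2 y x z
    have H3 := h3 x y z
    simp only [map_add, LinearMap.add_apply] at H1 H2 H2'
    simp only [hdia, map_sub, map_add, LinearMap.sub_apply, LinearMap.add_apply]
    linear_combination (norm := module) H1 - H2 + H2' - (2:K) • H3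
  · intro x y
    simp only [hdia, hcirc]
    abel
end

section
/- Let (A,⋆,P,Q) be an admissible differential Zinbiel algebra, with x·y = x⋆y + y⋆x the descendent commutative product, ⋄ defined by x⋄y = x⋆P(y) − P(x)⋆y, and [x,y] = x⋄y − y⋄x. Then the identity x⋆(y⋄z) − [x,y]⋆z − y⋄(x⋆z) + (x·P(y))⋆z = 0 holds for all x,y,z ∈ A. -/
/-- In an admissible differential Zinbiel algebra, with
x·y = x⋆y + y⋆x, x⋄y = x⋆P(y) − P(x)⋆y and [x,y] = x⋄y − y⋄x, the identity
x⋆(y⋄z) − [x,y]⋆z − y⋄(x⋆z) + (x·P(y))⋆z = 0 holds. -/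
theorem admissible_zinbiel_compat_identity {K A : Type*} [Field K] [CharZero K]
    [AddCommGroup A] [Module K A]
    (star : A →ₗ[K] A →ₗ[K] A)
    (hzin : ∀ x y z : A,
      star x (star y z) = star (star y x) z + star (star x y) z)
    (P Q : A →ₗ[K] A)
    (hP : ∀ x y : A, P (star x y) = star (P x) y + star x (P y))
    (hQ1 : ∀ x y : A, star (Q x) y = star x (P y) + Q (star x y))
    (hQ2 : ∀ x y : A, star x (Q y) = star (P x) y + Q (star x y))
    (mul : A → A → A)
    (hmul : ∀ x y : A, mul x y = star x y + star y x)
    (dia : A → A → A)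
    (hdia : ∀ x y : A, dia x y = star x (P y) - star (P x) y)
    (br : A → A → A)
    (hbrdef : ∀ x y : A, br x y = dia x y - dia y x) :
    ∀ x y z : A,
      star x (dia y z) - star (br x y) z - dia y (star x z)
        + star (mul x (P y)) z = 0 := by
  intro x y z
  simp only [hbrdef, hdia, hmul, hP, map_add, map_sub, LinearMap.add_apply,
    LinearMap.sub_apply, hzin]
  abel
end

section
/- On the Laurent polynomial algebra A = K[t,t⁻¹] with product tᵐ·tⁿ = tᵐ⁺ⁿ, derivation P(tⁿ) = n tⁿ⁻¹, bracket [tᵐ,tⁿ] = (n−m)tᵐ⁺ⁿ⁻¹, and for a fixed integer a the bilinear form Bₐ(tᵐ,tⁿ) = δ_{m+n,a}: Bₐ is symmetric, nondegenerate, invariant on the commutative product, and a commutative 2-cocycle on the bracket, i.e. Bₐ([x,y],z) + Bₐ([y,z],x) + Bₐ([z,x],y) = 0. -/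
open LaurentPolynomial

lemma laurent_mul_apply_aux {K : Type*} [Field K] (a : ℤ)
    (f g : LaurentPolynomial K) :
    (AddMonoidAlgebra.coeff (f * g)) a
      = Finsupp.sum (AddMonoidAlgebra.coeff f) (fun m c => c * (AddMonoidAlgebra.coeff g) (a - m)) := by
  rw [AddMonoidAlgebra.coeff_mul_apply_left]
  refine Finsupp.sum_congr fun m _ => ?_
  rw [neg_add_eq_sub]

/-- On the Laurent polynomial algebra K[t,t⁻¹] with derivation
P(tⁿ) = n tⁿ⁻¹, Witt bracket [x,y] = x·P(y) − P(x)·y (so [tᵐ,tⁿ] = (n−m)tᵐ⁺ⁿ⁻¹)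
and bilinear form Bₐ(tᵐ,tⁿ) = δ_{m+n,a}, the form Bₐ is symmetric, nondegenerate,
invariant on the product and a commutative 2-cocycle on the bracket. -/
theorem laurent_invariant_two_cocycle {K : Type*} [Field K] [CharZero K] (a : ℤ)
    (P : LaurentPolynomial K → LaurentPolynomial K)
    (hP : ∀ f : LaurentPolynomial K,
      P f = Finsupp.sum (AddMonoidAlgebra.coeff f) (fun n c => c • (n : K) • T (n - 1)))
    (B : LaurentPolynomial K → LaurentPolynomial K → K)
    (hB : ∀ f g : LaurentPolynomial K,
      B f g = Finsupp.sum (AddMonoidAlgebra.coeff f) (fun m c => c * (AddMonoidAlgebra.coeff g) (a - m)))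
    (br : LaurentPolynomial K → LaurentPolynomial K → LaurentPolynomial K)
    (hbr : ∀ f g : LaurentPolynomial K, br f g = f * P g - P f * g) :
    (∀ n : ℤ, P (T n) = (n : K) • T (n - 1)) ∧
    (∀ m n : ℤ, br (T m) (T n) = ((n - m : ℤ) : K) • T (m + n - 1)) ∧
    (∀ m n : ℤ, B (T m) (T n) = if m + n = a then 1 else 0) ∧
    (∀ f g : LaurentPolynomial K, B f g = B g f) ∧
    (∀ f : LaurentPolynomial K, (∀ g, B f g = 0) → f = 0) ∧
    (∀ f g h : LaurentPolynomial K, B (f * g) h = B f (g * h)) ∧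
    (∀ f g h : LaurentPolynomial K,
      B (br f g) h + B (br g h) f + B (br h f) g = 0) := by
  have keyB : ∀ f g : LaurentPolynomial K,
      B f g = (AddMonoidAlgebra.coeff (f * g)) a := by
    intro f g; rw [hB, laurent_mul_apply_aux]
  have hPT : ∀ n : ℤ, P (T n) = (n : K) • T (n - 1) := by
    intro n
    rw [hP]
    show Finsupp.sum (Finsupp.single n (1 : K)) _ = _
    rw [Finsupp.sum_single_index (by simp), one_smul]
  refine ⟨hPT, ?_, ?_, ?_, ?_, ?_, ?_⟩
  · intro m n
    rw [hbr, hPT, hPT, mul_smul_comm, smul_mul_assoc, ← T_add, ← T_add,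
      show m + (n - 1) = m + n - 1 by ring, show m - 1 + n = m + n - 1 by ring,
      ← sub_smul]
    push_cast
    ring_nf
  · intro m n
    rw [hB]
    show Finsupp.sum (Finsupp.single m (1 : K)) _ = _
    rw [Finsupp.sum_single_index (by simp), one_mul]
    show (Finsupp.single n (1 : K)) (a - m) = _
    rw [Finsupp.single_apply]
    exact if_congr (by omega) rfl rfl
  · intro f g; rw [keyB, keyB, mul_comm]
  · intro f hf
    ext m
    have := hf (T (a - m))
    rw [keyB] at this
    have h2 : (AddMonoidAlgebra.coeff (f * T (a - m))) a = AddMonoidAlgebra.coeff f m := by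
      show (AddMonoidAlgebra.coeff (f * AddMonoidAlgebra.single (a - m) (1 : K))) a = _
      rw [AddMonoidAlgebra.coeff_mul_single_apply, mul_one]
      congr 1; ring
    rw [h2] at this
    simpa using this
  · intro f g h; rw [keyB, keyB, mul_assoc]
  · intro f g h
    rw [keyB, keyB, keyB, ← Finsupp.add_apply, ← Finsupp.add_apply,
      ← AddMonoidAlgebra.coeff_add, ← AddMonoidAlgebra.coeff_add,
      show br f g * h + br g h * f + br h f * g = 0 from by
        rw [hbr, hbr, hbr]; ring]
    simp
end
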